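/- Let R be a *-ring and let a ∈ R be both group invertible and Moore–Penrose invertible. Then a is an SEP element if and only if a²a*a# is a projection. -/
import Mathlib

theorem stmt_4 (R : Type*) [Ring R] [StarRing R] (a ap ag : R)
    (h1 : a * ap * a = a) (h2 : ap * a * ap = ap)
    (h3 : star (a * ap) = a * ap) (h4 : star (ap * a) = ap * a)
    (g1 : a * ag * a = a) (g2 : ag * a * ag = ag) (g3 : a * ag = ag * a) :
    (star a = ap ∧ ap = ag) ↔ ((a * a * star a * ag) * (a * a * star a * ag) = (a * a * star a * ag) ∧ star ((a * a * star a * ag)) = (a * a * star a * ag)) := by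
  constructor
  · rintro ⟨hA, hpg⟩
    have comm : a * ap = ap * a := by rw [hpg]; exact g3
    have key : a * a * star a * ag = a * ap := by
      rw [hA, ← hpg]
      linear_combination (norm := noncomm_ring) a * comm * ap + h1 * ap
    rw [key]
    exact ⟨by linear_combination (norm := noncomm_ring) h1 * ap, h3⟩
  · rintro ⟨he1, he2⟩
    have B0 := h1
    have B1 : star a * star ap * star a = star a := by
      simpa [star_mul, mul_assoc] using congrArg star h1
    have B2 := h2
    have B3 : star ap * star a * star ap = star ap := by
      simpa [star_mul, mul_assoc] using congrArg star h2
    have B4 : star ap * star a = a * ap := by rw [← star_mul]; exact h3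
    have B5 : star a * star ap = ap * a := by rw [← star_mul]; exact h4
    have B6 := g1
    have B7 : star a * star ag * star a = star a := by
      simpa [star_mul, mul_assoc] using congrArg star g1
    have B8 := g2
    have B9 : star ag * star a * star ag = star ag := by
      simpa [star_mul, mul_assoc] using congrArg star g2
    have B10 := g3
    have B11 : star ag * star a = star a * star ag := by
      simpa [star_mul] using congrArg star g3
    have B12 : a * a * (star a) * ag * a * a * (star a) * ag = a * a * (star a) * ag := by
      linear_combination (norm := noncomm_ring) he1
    have B13 : (star ag) * a * (star a) * (star a) = a * a * (star a) * ag := by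
      simpa [star_mul, star_star, mul_assoc] using he2
    have E14 : a * ap * a = a := by
      linear_combination (norm := noncomm_ring) B0
    have E15 : (star a) * (star ap) * (star a) = (star a) := by
      linear_combination (norm := noncomm_ring) B1
    have E17 : (star ap) * (star a) * (star ap) = (star ap) := by
      linear_combination (norm := noncomm_ring) B3
    have E18 : (star ap) * (star a) = a * ap := by
      linear_combination (norm := noncomm_ring) B4
    have E19 : (star a) * (star ap) = ap * a := by
      linear_combination (norm := noncomm_ring) B5
    have E20 : a * ag * a = a := by
      linear_combination (norm := noncomm_ring) B6
    have E21 : (star a) * (star ag) * (star a) = (star a) := by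
      linear_combination (norm := noncomm_ring) B7
    have E22 : ag * a * ag = ag := by
      linear_combination (norm := noncomm_ring) B8
    have E23 : (star ag) * (star a) * (star ag) = (star ag) := by
      linear_combination (norm := noncomm_ring) B9
    have E24 : a * ag = ag * a := by
      linear_combination (norm := noncomm_ring) B10
    have E25 : (star ag) * (star a) = (star a) * (star ag) := by
      linear_combination (norm := noncomm_ring) B11
    have E26 : a * a * (star a) * a * (star a) * ag = a * a * (star a) * ag := by
      linear_combination (norm := noncomm_ring) B12 + (a * a * (star a) * E24) * a * (star a) * ag + -((a * a * (star a) * E20) * (star a) * ag)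
    have E27 : (star ag) * a * (star a) * (star a) = a * a * (star a) * ag := by
      linear_combination (norm := noncomm_ring) B13
    have E28 : a * (star a) * (star ap) = (star ap) * (star a) * a := by
      linear_combination (norm := noncomm_ring) -((E18) * a) + a * E19
    have E29 : ap * (star ap) * (star a) = (star a) * (star ap) * ap := by
      linear_combination (norm := noncomm_ring) -((E19) * ap) + ap * E18
    have E30 : a * ag * (star ap) * (star a) = (star ap) * (star a) := by
      linear_combination (norm := noncomm_ring) (E20) * ap + a * ag * E18 + -(E18)
    have E31 : (star a) * (star ap) = (star a) * (star ap) * a * ag := by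
      linear_combination (norm := noncomm_ring) -((E19) * ag * a) + -(ap * E20) + -((star a) * (star ap) * E24) + E19
    have E32 : a * ag = a * ag * (star a) * (star ap) := by
      linear_combination (norm := noncomm_ring) -((E24) * ap * a) + -(ag * E14) + -(a * ag * E19) + E24
    have E33 : ag * (star ap) * (star a) = a * ag * ap := by
      linear_combination (norm := noncomm_ring) -((E24) * ap) + ag * E18
    have E34 : (star a) * (star ag) = (star a) * (star ag) * (star ap) * (star a) := by
      linear_combination (norm := noncomm_ring) (E25) * (star ap) * (star a) + -((star ag) * E15) + -(E25)
    have E35 : (star a) * (star ap) * a * (star a) * ag = (star a) * (star ap) * a * (star a) * a * (star a) * ag := by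
      linear_combination (norm := noncomm_ring) -((E19) * a * (star a) * a * (star a) * ag) + -(ap * E26) + (E19) * a * (star a) * ag
    have E36 : a * (star a) * ag = a * (star a) * a * (star a) * ag := by
      linear_combination (norm := noncomm_ring) -((E24) * a * (star a) * a * (star a) * ag) + -(ag * E26) + (E20) * (star a) * a * (star a) * ag + (E24) * a * (star a) * ag + -((E20) * (star a) * ag)
    have E37 : a * a * (star a) * a * (star a) * a * ag = a * a * (star a) * a * ag := by
      linear_combination (norm := noncomm_ring) (E26) * a + a * a * (star a) * a * (star a) * E24 + -(a * a * (star a) * E24)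
    have E39 : ap * (star ag) * a * (star a) * (star a) = (star a) * (star ap) * a * (star a) * ag := by
      linear_combination (norm := noncomm_ring) -((E19) * a * (star a) * ag) + ap * E27
    have E41 : (star ag) * a * (star a) * (star a) = (star ag) * a * (star a) * (star a) * a * ag := by
      linear_combination (norm := noncomm_ring) -((E27) * a * ag) + -(a * a * (star a) * E22) + E27
    have E42 : ag * (star ag) * a * (star a) * (star a) = a * (star a) * ag := by
      linear_combination (norm := noncomm_ring) -((E24) * a * (star a) * ag) + ag * E27 + (E20) * (star a) * ag
    have E43 : a * a * (star a) * a * ag = (star ag) * a * (star a) * (star a) * a := by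
      linear_combination (norm := noncomm_ring) -((E27) * a) + a * a * (star a) * E24
    have E44 : a * (star a) = (star ap) * (star a) * a * (star a) := by
      linear_combination (norm := noncomm_ring) (E28) * (star a) + -(a * E15)
    have E46 : (star a) * (star ap) * ap = (star a) * (star ap) * ap * (star a) * (star ag) := by
      linear_combination (norm := noncomm_ring) (E29) * (star ag) * (star a) + -(ap * (star ap) * E21) + (star a) * (star ap) * ap * E25 + -(E29)
    have E47 : a * ag * (star ap) = (star ap) := by
      linear_combination (norm := noncomm_ring) (E30) * (star ap) + -(a * ag * E17) + E17
    have E49 : (star a) * (star ap) * a * a * ag = (star a) * (star ap) * a := by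
      linear_combination (norm := noncomm_ring) -((E31) * a) + (star a) * (star ap) * a * E24
    have E51 : (star a) * (star ap) * ag = (star a) * (star ap) * ag * (star a) * (star ap) := by
      linear_combination (norm := noncomm_ring) -((E19) * ag * (star a) * (star ap)) + ap * E32 + (E19) * ag
    have E52 : ag = ag * (star a) * (star ap) := by
      linear_combination (norm := noncomm_ring) (E22) * (star a) * (star ap) + ag * E32 + -(E22)
    have E53 : ag = a * ag * ag := by
      linear_combination (norm := noncomm_ring) -((E24) * ag * (star a) * (star ap)) + ag * E32 + -(a * ag * E52) + -(E22)
    have E54 : ag * (star ap) = a * ag * ap * (star ap) := by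
      linear_combination (norm := noncomm_ring) (E33) * (star ap) + -(ag * E17)
    have E56 : (star ag) = (star ag) * (star ap) * (star a) := by
      linear_combination (norm := noncomm_ring) (E23) * (star ap) * (star a) + (star ag) * E34 + -(E23)
    have E58 : (star a) * (star ap) * a * (star a) * a * (star a) * a * ag = (star a) * (star ap) * a * (star a) * a * ag := by
      linear_combination (norm := noncomm_ring) -((E35) * a) + (star a) * (star ap) * a * (star a) * a * (star a) * E24 + -((star a) * (star ap) * a * (star a) * E24)
    have E59 : (star a) * ag = (star a) * a * (star a) * ag := by
      linear_combination (norm := noncomm_ring) -((E19) * (star a) * a * (star a) * ag) + ap * E36 + (E15) * a * (star a) * ag + (E19) * (star a) * ag + -((E15) * ag)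
    have E70 : (star ag) * a * (star a) * (star a) = (star ag) * a * (star a) * (star a) * (star ag) * a * (star a) * (star a) := by
      linear_combination (norm := noncomm_ring) (E26) * (star ag) * a * (star a) * (star a) + -(a * a * (star a) * a * (star a) * E42) + -((E27) * (star ag) * a * (star a) * (star a)) + a * a * (star a) * E36 + -(E26) + E27
    have E80 : (star ap) * ap = (star ap) * ap * (star a) * (star ag) := by
      linear_combination (norm := noncomm_ring) (E17) * ap * (star a) * (star ag) + (star ap) * E46 + -((E17) * ap)
    have E82 : (star ap) * (star a) = (star ap) * (star a) * (star a) * (star ag) := by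
      linear_combination (norm := noncomm_ring) (E28) * ap * (star a) * (star ag) + a * E46 + -(((star ap) * (star a) * E18) * (star a) * (star ag)) + ((star ap) * E15) * (star a) * (star ag) + -((E28) * ap) + (star ap) * (star a) * E18 + -((star ap) * E15)
    have E83 : (star a) * (star a) = (star a) * (star a) * a * ag := by
      linear_combination (norm := noncomm_ring) -((E46) * a * (star a) * (star a) * a * ag) + (star a) * (star ap) * ap * (star a) * E41 + -(((star a) * (star ap) * E19) * (star a) * (star a) * a * ag) + (E46) * a * (star a) * (star a) + (E15) * (star ap) * (star a) * (star a) * a * ag + ((star a) * (star ap) * E19) * (star a) * (star a) + -((E15) * (star ap) * (star a) * (star a)) + (E15) * (star a) * a * ag + -((E15) * (star a))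
    have E86 : a * a * (star a) * a = (star ag) * a * (star a) * (star a) * a * (star ap) := by
      linear_combination (norm := noncomm_ring) (E37) * (star ap) + -(a * a * (star a) * a * (star a) * E47) + (E43) * (star ap) + -(a * a * (star a) * E28) + -((a * a * E15) * a)
    have E87 : a * (star ap) * (star a) * a = a * a * (star a) * a := by
      linear_combination (norm := noncomm_ring) (E43) * (star ap) + -(a * a * (star a) * E47) + -(E86) + -(a * E28)
    have E92 : (star a) * (star ap) * a = (star a) * (star ap) * (star ap) * (star a) * a := by
      linear_combination (norm := noncomm_ring) (E49) * (star a) * (star ap) + (star a) * (star ap) * a * E32 + -(E49) + (star a) * (star ap) * E28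
    have E95 : (star ap) * (star a) * ag = ag := by
      linear_combination (norm := noncomm_ring) (E14) * ag * ag + a * ap * E53 + (E18) * ag + -(E53)
    have E96 : ap * ag = (star a) * (star ap) * ag * ag := by
      linear_combination (norm := noncomm_ring) -((E19) * ag * ag) + ap * E53
    have E116 : (star a) * (star ap) * a * (star a) * a = (star a) * (star ap) * a := by
      linear_combination (norm := noncomm_ring) (E58) * (star ap) + -((star a) * (star ap) * a * (star a) * a * (star a) * E47) + (star a) * (star ap) * a * (star a) * E47 + -((star a) * (star ap) * a * (star a) * E28) + -(((star a) * (star ap) * a * E15) * a) + (star a) * (star ap) * E28 + -(E92)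
    have E117 : (star a) * a * ag = (star a) * a * (star a) * a * ag := by
      linear_combination (norm := noncomm_ring) -((E51) * a * (star a) * a * (star a) * a * ag) + -((star a) * (star ap) * ag * E58) + -(((star a) * (star ap) * E24) * (star a) * a * (star a) * a * ag) + (E51) * a * (star a) * a * ag + -((E31) * (star a) * a * (star a) * a * ag) + ((star a) * (star ap) * E24) * (star a) * a * ag + (E31) * (star a) * a * ag + (E15) * a * (star a) * a * ag + -((E15) * a * ag)
    have E120 : ag = a * (star a) * ag := by
      linear_combination (norm := noncomm_ring) (E30) * a * (star a) * ag + a * ag * (star ap) * E59 + -((E30) * ag) + -((E44) * ag) + -(E95)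
    have E121 : a * ag * ap * ag = a * ag * (star a) * ag := by
      linear_combination (norm := noncomm_ring) (E33) * a * (star a) * ag + ag * (star ap) * E59 + -((a * ag * E19) * (star a) * ag) + (a * ag * E15) * ag + -((E33) * ag)
    have E123 : ap * ag = (star a) * ag := by
      linear_combination (norm := noncomm_ring) (E39) * a * (star a) * ag + ap * (star ag) * a * (star a) * E59 + -(((star a) * (star ap) * a * (star a) * E24) * (star a) * ag) + (E116) * ag * (star a) * ag + -((E39) * ag) + -((E31) * (star a) * ag) + ((star a) * (star ap) * E120) * ag + E96 + (E15) * ag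
    have E160 : (star ap) * (star a) * (star a) = a * (star a) * (star a) := by
      linear_combination (norm := noncomm_ring) -((E80) * a * (star a) * (star a) * (star ag) * a * (star a) * (star a)) + (star ap) * ap * (star a) * E70 + -(((star ap) * E19) * (star a) * (star a) * (star ag) * a * (star a) * (star a)) + ((star ap) * E15) * (star a) * (star ag) * a * (star a) * (star a) + (E80) * a * (star a) * (star a) + -((E82) * a * (star a) * (star a)) + ((star ap) * E19) * (star a) * (star a) + -((E44) * (star a)) + -(((star ap) * E15) * (star a))
    have E172 : (star a) = (star a) * a * ag := by
      linear_combination (norm := noncomm_ring) (E25) * (star a) * a * ag + (star ag) * E83 + (E21) * a * ag + -((E25) * (star a)) + -(E21)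
    have E180 : (star a) * (star ag) = a * ag := by
      linear_combination (norm := noncomm_ring) -((E87) * ag * ag) + a * a * (star a) * E53 + -(a * (star ap) * (star a) * E53) + E27 + a * E95 + (star ag) * E160 + (E56) * (star a) + -(E25)
    have E181 : (star a) * (star ag) * (star ap) = (star ap) := by
      linear_combination (norm := noncomm_ring) -((E87) * ag * ap * (star ap)) + a * a * (star a) * E54 + -(a * (star ap) * (star a) * E54) + (E27) * (star ap) + (a * E95) * (star ap) + ((star ag) * E160) * (star ap) + (E56) * (star a) * (star ap) + E47 + -((E25) * (star ap))
    have E189 : ag * ag = (star a) * ag := by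
      linear_combination (norm := noncomm_ring) (E33) * ag + -(ag * E95) + E121 + -((E180) * (star a) * ag) + (E21) * ag
    have E191 : (star a) * (star ag) * ag = ag := by
      linear_combination (norm := noncomm_ring) (E25) * (star ap) * ag * ag + (star ag) * E96 + (E181) * ag * ag + (star ap) * E189 + E95 + -((star ag) * E123) + -((E25) * ag)
    have E212 : (star a) * (star ap) = (star a) * a := by
      linear_combination (norm := noncomm_ring) -((E51) * a * (star a) * a) + -((star a) * (star ap) * ag * E116) + -(((star a) * (star ap) * E24) * (star a) * a) + (E51) * a + -((E31) * (star a) * a) + (star a) * (star ap) * E24 + E31 + (E15) * a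
    have E213 : (star a) * (star ag) = (star a) * (star ap) := by
      linear_combination (norm := noncomm_ring) -((E52) * a * (star a) * a) + -(ag * E116) + -((E24) * (star a) * a) + (E52) * a + -((E180) * (star a) * a) + (E21) * a + E24 + E180 + -(E212)
    have E214 : ag = (star a) := by
      linear_combination (norm := noncomm_ring) (E29) * a * (star a) * a * ag + ap * (star ap) * E117 + -(((star a) * (star ap) * E19) * (star a) * a * ag) + (E15) * (star ap) * (star a) * a * ag + -((E29) * a * ag) + ((star a) * (star ap) * E19) * ag + (E15) * a * ag + -((E15) * (star ap) * ag) + -(E172) + (E213) * ag + -(E191)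
    have hg : ag = star a := by
      linear_combination (norm := noncomm_ring) E214
    have hA2 : star a * a * star a = star a := by rw [← hg]; exact g2
    have c1 : a * ap = a * star a := by
      linear_combination (norm := noncomm_ring) -B4 - (star ap) * hA2 + B4 * (a * star a) + h1 * (star a)
    have c2 : ap * a = star a * a := by
      linear_combination (norm := noncomm_ring) -B5 - hA2 * (star ap) + (star a * a) * B5 + (star a) * h1
    have hp : ap = star a := by
      linear_combination (norm := noncomm_ring) -h2 + ap * c1 + c2 * (star a) + hA2
    exact ⟨hp.symm, hp.trans hg.symm⟩
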